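/- Let N and s be integers with 0 ≤ s < N - 2, and let k̄ be an integer with 1 ≤ k̄ and k̄ + s + 2 ≤ N. Then (s+1)/π ≤ (cos(k̄π/N) - cos((k̄+s+1)π/N)) / (cos((k̄-1)π/N) - cos(k̄π/N)) ≤ (s+1)(s+3)π²/4. -/

import Mathlib

open Real

lemma sin_secant_upper {b a : ℝ} (hb : 0 < b) (hba : b ≤ a) (ha : a ≤ π) :
    Real.sin a * b ≤ Real.sin b * a := by
  have ha0 : 0 < a := hb.trans_le hba
  have h := strictConcaveOn_sin_Icc.concaveOn.2 (Set.mem_Icc.2 ⟨le_rfl, pi_pos.le⟩)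
    (Set.mem_Icc.2 ⟨ha0.le, ha⟩)
    (show (0:ℝ) ≤ 1 - b / a by rw [sub_nonneg, div_le_one ha0]; exact hba)
    (show (0:ℝ) ≤ b / a by positivity) (by ring)
  simp only [smul_eq_mul, mul_zero, Real.sin_zero, zero_add] at h
  rw [div_mul_cancel₀ _ ha0.ne'] at h
  calc Real.sin a * b = (b / a * Real.sin a) * a := by field_simp
    _ ≤ Real.sin b * a := mul_le_mul_of_nonneg_right h ha0.le

lemma sin_secant_lower {b a : ℝ} (hb : 0 ≤ b) (hba : b ≤ a) (ha : a < π) :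
    Real.sin b * (π - a) ≤ Real.sin a * (π - b) := by
  have hbpi : b < π := lt_of_le_of_lt hba ha
  have hd : 0 < π - b := by linarith
  have h := strictConcaveOn_sin_Icc.concaveOn.2 (Set.mem_Icc.2 ⟨hb, hbpi.le⟩)
    (Set.mem_Icc.2 ⟨pi_pos.le, le_rfl⟩)
    (show (0:ℝ) ≤ (π - a) / (π - b) by apply div_nonneg <;> linarith)
    (show (0:ℝ) ≤ (a - b) / (π - b) by apply div_nonneg <;> linarith)
    (by field_simp; ring)
  have harg : (π - a) / (π - b) * b + (a - b) / (π - b) * π = a := by field_simp; ring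
  simp only [smul_eq_mul, Real.sin_pi, mul_zero, add_zero, harg] at h
  calc Real.sin b * (π - a) = ((π - a) / (π - b) * Real.sin b) * (π - b) := by
        field_simp
    _ ≤ Real.sin a * (π - b) := mul_le_mul_of_nonneg_right h hd.le

set_option maxHeartbeats 1000000 in
/-- Ratio of the enlarged Chebyshev gap (after removing `s` consecutive points)
to the ordinary gap immediately before it. -/
theorem chebyshev_enlarged_gap_ratio
    (N s kbar : ℕ) (hs : s + 2 < N) (hk1 : 1 ≤ kbar) (hk2 : kbar + s + 2 ≤ N) :
    (s + 1 : ℝ) / Real.pi ≤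
      (Real.cos (kbar * Real.pi / N) - Real.cos ((kbar + s + 1) * Real.pi / N)) /
        (Real.cos (((kbar : ℝ) - 1) * Real.pi / N) - Real.cos (kbar * Real.pi / N)) ∧
    (Real.cos (kbar * Real.pi / N) - Real.cos ((kbar + s + 1) * Real.pi / N)) /
        (Real.cos (((kbar : ℝ) - 1) * Real.pi / N) - Real.cos (kbar * Real.pi / N)) ≤
      (s + 1) * (s + 3) * Real.pi ^ 2 / 4 := by
  have hπ := pi_pos
  have ht0 : (0:ℝ) ≤ (s : ℝ) := Nat.cast_nonneg s
  have hk1' : (1:ℝ) ≤ (kbar : ℝ) := by exact_mod_cast hk1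
  have hsn : (s:ℝ) + 3 ≤ (N:ℝ) := by exact_mod_cast hs
  have hksn : (kbar:ℝ) + (s:ℝ) + 2 ≤ (N:ℝ) := by exact_mod_cast hk2
  set n : ℝ := (N : ℝ)
  set k : ℝ := (kbar : ℝ)
  set t : ℝ := (s : ℝ)
  have hn0 : (0:ℝ) < n := by linarith
  set θ : ℝ := π / (2 * n) with hθ
  have hθ0 : 0 < θ := by positivity
  set A : ℝ := (2 * k + t + 1) * θ with hA
  set B : ℝ := (2 * k - 1) * θ with hB
  set C : ℝ := (t + 1) * θ with hC
  have hpi_eq : π = 2 * n * θ := by rw [hθ]; field_simp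
  have hB0 : 0 < B := by apply mul_pos _ hθ0; linarith
  have hBA : B ≤ A := by apply mul_le_mul_of_nonneg_right _ hθ0.le; linarith
  have hApi : A < π := by
    rw [hpi_eq]; apply mul_lt_mul_of_pos_right _ hθ0; linarith
  have hθC : θ ≤ C := by nlinarith
  have hCpi2 : C ≤ π / 2 := by rw [hpi_eq, hC]; nlinarith
  have hC0 : 0 < C := lt_of_lt_of_le hθ0 hθC
  have hsinB : 0 < Real.sin B := Real.sin_pos_of_pos_of_lt_pi hB0 (lt_of_le_of_lt hBA hApi)
  have hsinA : 0 < Real.sin A := Real.sin_pos_of_pos_of_lt_pi (hB0.trans_le hBA) hApi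
  have hsinθ : 0 < Real.sin θ := Real.sin_pos_of_pos_of_lt_pi hθ0 (by rw [hpi_eq]; nlinarith)
  have hsinC : 0 < Real.sin C :=
    Real.sin_pos_of_pos_of_lt_pi hC0 (lt_of_le_of_lt hCpi2 (by linarith))
  -- rewrite numerator and denominator via product formula
  have hnum : Real.cos (k * π / n) - Real.cos ((k + t + 1) * π / n)
      = 2 * Real.sin A * Real.sin C := by
    rw [Real.cos_sub_cos]
    have e1 : (k * π / n + (k + t + 1) * π / n) / 2 = A := by
      rw [hA, hθ]; field_simp; ring
    have e2 : (k * π / n - (k + t + 1) * π / n) / 2 = -C := by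
      rw [hC, hθ]; field_simp; ring
    rw [e1, e2, Real.sin_neg]; ring
  have hden : Real.cos ((k - 1) * π / n) - Real.cos (k * π / n)
      = 2 * Real.sin B * Real.sin θ := by
    rw [Real.cos_sub_cos]
    have e1 : ((k - 1) * π / n + k * π / n) / 2 = B := by
      rw [hB, hθ]; field_simp; ring
    have e2 : ((k - 1) * π / n - k * π / n) / 2 = -θ := by
      rw [hθ]; field_simp; ring
    rw [e1, e2, Real.sin_neg]; ring
  rw [hnum, hden]
  have hden0 : 0 < 2 * Real.sin B * Real.sin θ := by positivity
  -- upper estimates on sines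
  have hup1 : Real.sin A ≤ (t + 3) * Real.sin B := by
    have h := sin_secant_upper hB0 hBA hApi.le
    have hAB : A ≤ (t + 3) * B := by
      rw [hA, hB]
      have h1 : 2 * k + t + 1 ≤ (t + 3) * (2 * k - 1) := by nlinarith
      have : ((t + 3) * (2 * k - 1)) * θ = (t + 3) * ((2 * k - 1) * θ) := by ring
      rw [← this]
      exact mul_le_mul_of_nonneg_right h1 hθ0.le
    have h2 : Real.sin A * B ≤ (t + 3) * Real.sin B * B := by
      calc Real.sin A * B ≤ Real.sin B * ((t + 3) * B) :=
            h.trans (mul_le_mul_of_nonneg_left hAB hsinB.le)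
        _ = (t + 3) * Real.sin B * B := by ring
    exact le_of_mul_le_mul_right h2 hB0
  have hup2 : Real.sin C ≤ (t + 1) * Real.sin θ := by
    have h := sin_secant_upper hθ0 hθC (by linarith)
    -- h : sin C * θ ≤ sin θ * C
    rw [hC] at h
    have : Real.sin C * θ ≤ (t + 1) * Real.sin θ * θ := by nlinarith
    exact le_of_mul_le_mul_right this hθ0
  -- lower estimates on sines
  have hlo1 : (t + 3) * Real.sin B ≤ (2 * t + 5) * Real.sin A := by
    have h := sin_secant_lower hB0.le hBA hApi
    have hπA : π - A = (2 * n - 2 * k - t - 1) * θ := by rw [hpi_eq, hA]; ring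
    have hπB : π - B = (2 * n - 2 * k + 1) * θ := by rw [hpi_eq, hB]; ring
    rw [hπA, hπB] at h
    set m : ℝ := 2 * n - 2 * k + 1 with hm
    have hm5 : 2 * t + 5 ≤ m := by rw [hm]; linarith
    have hm0 : 0 < m := by linarith
    have hmm : (2 * n - 2 * k - t - 1) = m - t - 2 := by rw [hm]; ring
    rw [hmm] at h
    -- h : sin B * ((m - t - 2) * θ) ≤ sin A * (m * θ)
    have h' : Real.sin B * (m - t - 2) ≤ Real.sin A * m := by
      have h1 : Real.sin B * (m - t - 2) * θ ≤ Real.sin A * m * θ := by nlinarith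
      exact le_of_mul_le_mul_right h1 hθ0
    have key : (t + 3) * m ≤ (m - t - 2) * (2 * t + 5) := by nlinarith
    have h2 : (t + 3) * Real.sin B * m ≤ (2 * t + 5) * Real.sin A * m := by
      nlinarith [mul_le_mul_of_nonneg_right key hsinB.le,
        mul_le_mul_of_nonneg_left h' (by linarith : (0:ℝ) ≤ 2 * t + 5)]
    exact le_of_mul_le_mul_right h2 hm0
  have hlo2 : 2 * (t + 1) * Real.sin θ ≤ π * Real.sin C := by
    have h1 : 2 / π * C ≤ Real.sin C := Real.mul_le_sin hC0.le hCpi2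
    have h2C : 2 * C ≤ π * Real.sin C := by
      have h2 := mul_le_mul_of_nonneg_left h1 hπ.le
      calc 2 * C = π * (2 / π * C) := by field_simp
        _ ≤ π * Real.sin C := h2
    have hsθ : Real.sin θ ≤ θ := Real.sin_le hθ0.le
    rw [hC] at h2C
    nlinarith
  constructor
  · -- lower bound
    rw [div_le_div_iff₀ hπ hden0]
    -- (t+1) * (2 sinB sinθ) ≤ (2 sinA sinC) * π
    have hprod : ((t + 3) * Real.sin B) * (2 * (t + 1) * Real.sin θ) ≤
        ((2 * t + 5) * Real.sin A) * (π * Real.sin C) :=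
      mul_le_mul hlo1 hlo2 (by positivity) (by positivity)
    nlinarith [mul_pos hsinB hsinθ, mul_pos hsinA hsinC,
      mul_nonneg (mul_nonneg ht0 hsinB.le) hsinθ.le]
  · -- upper bound
    rw [div_le_div_iff₀ hden0 (by norm_num : (0:ℝ) < 4)]
    have hprod : Real.sin A * Real.sin C ≤
        ((t + 3) * Real.sin B) * ((t + 1) * Real.sin θ) :=
      mul_le_mul hup1 hup2 hsinC.le (by positivity)
    have hπ2 : 4 ≤ π ^ 2 := by nlinarith [pi_gt_three]
    have hBθ : 0 ≤ Real.sin B * Real.sin θ := by positivity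
    nlinarith [mul_nonneg (mul_nonneg (mul_nonneg ht0 ht0) hsinB.le) hsinθ.le,
      mul_le_mul_of_nonneg_right hπ2 (mul_nonneg (mul_nonneg
        (mul_nonneg (by linarith : (0:ℝ) ≤ t + 3) (by linarith : (0:ℝ) ≤ t + 1)) hsinB.le) hsinθ.le)]
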